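/- Let Σ = {a,b}, let (n_j)_{j≥1} with n_j ≥ 2, define α₀ = a, β₀ = b, α_{j+1} = (α_j²β_j)^{n_{j+1}}, β_{j+1} = (β_j²α_j)^{n_{j+1}}, and N_k = |α_k|. Let u be any factor of the doubly infinite concatenation of the α_k, β_k blocks (i.e., u factors the bi-infinite word w = lim α_j) with |u| ≤ N_k - 3N_{k-1}. Then u is a factor of α_k β_k or of β_k α_k. -/

import Mathlib

mutual
/-- The word `α_j` over `{a, b}` (with `a := true`, `b := false`):
`α₀ = a`, `α_{j+1} = (α_j α_j β_j)^{n_{j+1}}`. -/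
def wordA (n : ℕ → ℕ) : ℕ → List Bool
  | 0 => [true]
  | j + 1 => (List.replicate (n (j + 1)) (wordA n j ++ wordA n j ++ wordB n j)).flatten

/-- The word `β_j`: `β₀ = b`, `β_{j+1} = (β_j β_j α_j)^{n_{j+1}}`. -/
def wordB (n : ℕ → ℕ) : ℕ → List Bool
  | 0 => [false]
  | j + 1 => (List.replicate (n (j + 1)) (wordB n j ++ wordB n j ++ wordA n j)).flatten
end

/-- `N_k = ∏_{j=1}^k (3 n_j)`, the common length of `α_k` and `β_k`. -/
def Nlen (n : ℕ → ℕ) (k : ℕ) : ℕ := ∏ j ∈ Finset.Icc 1 k, 3 * n j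

/- ### Auxiliary lemmas -/

lemma flatten_replicate_length {α : Type*} (c : ℕ) (p : List α) :
    ((List.replicate c p).flatten).length = c * p.length := by
  induction c with
  | zero => simp
  | succ c ih => rw [List.replicate_succ, List.flatten_cons, List.length_append, ih]; ring

lemma flatten_replicate_prefix {α : Type*} (b c : ℕ) (p : List α) (h : b ≤ c) :
    (List.replicate b p).flatten <+: (List.replicate c p).flatten := by
  have hc : List.replicate c p = List.replicate b p ++ List.replicate (c - b) p := by
    rw [← List.replicate_add]; congr 1; omega
  rw [hc, List.flatten_append]; exact List.prefix_append _ _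

lemma flatten_replicate_flatten {α : Type*} (c : ℕ) (Q : List (List α)) :
    ((List.replicate c Q).flatten).flatten = (List.replicate c Q.flatten).flatten := by
  induction c with
  | zero => simp
  | succ c ih =>
      rw [List.replicate_succ, List.replicate_succ, List.flatten_cons, List.flatten_cons,
        List.flatten_append, ih]

lemma word_length (n : ℕ → ℕ) :
    ∀ j, (wordA n j).length = Nlen n j ∧ (wordB n j).length = Nlen n j := by
  intro j
  induction j with
  | zero => simp [wordA, wordB, Nlen]
  | succ j ih =>
      have hN : Nlen n (j + 1) = Nlen n j * (3 * n (j + 1)) := by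
        rw [Nlen, Nlen, Finset.prod_Icc_succ_top (by omega)]
      constructor
      · rw [wordA, flatten_replicate_length, List.length_append, List.length_append,
          ih.1, ih.2, hN]; ring
      · rw [wordB, flatten_replicate_length, List.length_append, List.length_append,
          ih.1, ih.2, hN]; ring

/-- The key "pair" lemma: a factor of a concatenation of blocks, each equal to `A` or `B`
(of common length), whose length is at most the block length, is a factor of the
concatenation of two blocks. -/
lemma pair_lemma {A B : List Bool} (hAB : A.length = B.length) :
    ∀ (L : List (List Bool)), (∀ x ∈ L, x = A ∨ x = B) →
    ∀ u : List Bool, u <:+: L.flatten → u.length ≤ A.length →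
    u <:+: (A ++ A) ∨ u <:+: (A ++ B) ∨ u <:+: (B ++ A) ∨ u <:+: (B ++ B) := by
  intro L
  induction L with
  | nil =>
      intro _ u hu _
      rw [List.flatten_nil, List.infix_nil] at hu
      subst hu
      exact Or.inl List.nil_infix
  | cons x L ih =>
      intro hmem u hu hulen
      obtain ⟨s, r, heq⟩ := hu
      rw [List.flatten_cons] at heq
      have hx : x = A ∨ x = B := hmem x (by simp)
      have hxlen : x.length = A.length := by rcases hx with h | h <;> simp [h, hAB]
      by_cases hs : x.length ≤ s.length
      · -- the occurrence is entirely inside `L.flatten`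
        have hspre : s <+: x ++ L.flatten := ⟨u ++ r, by rw [← heq]; simp⟩
        have hxp : x <+: s :=
          List.prefix_of_prefix_length_le (List.prefix_append _ _) hspre hs
        obtain ⟨s', rfl⟩ := hxp
        have : s' ++ u ++ r = L.flatten := by
          apply List.append_cancel_left (as := x); rw [← heq]; simp
        exact ih (fun y hy => hmem y (by simp [hy])) u ⟨s', r, this⟩ hulen
      · push_neg at hs
        cases L with
        | nil =>
            -- `u` is a factor of the single block `x`
            have hux : u <:+: x := by
              refine ⟨s, r, ?_⟩; rw [heq]; simp
            rcases hx with h | h <;> subst h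
            · exact Or.inl (hux.trans (List.prefix_append _ _).isInfix)
            · exact Or.inr (Or.inr (Or.inr (hux.trans (List.prefix_append _ _).isInfix)))
        | cons y L' =>
            have hy : y = A ∨ y = B := hmem y (by simp)
            have hylen : y.length = A.length := by rcases hy with h | h <;> simp [h, hAB]
            have heq' : (s ++ u) ++ (r) = (x ++ y) ++ L'.flatten := by
              rw [heq]; simp [List.flatten_cons]
            have hsu : s ++ u <+: x ++ y := by
              refine List.prefix_of_prefix_length_le ⟨r, heq'⟩ (List.prefix_append _ _) ?_
              simp only [List.length_append]
              omega
            have huxy : u <:+: x ++ y :=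
              (List.suffix_append s u).isInfix.trans hsu.isInfix
            rcases hx with h | h <;> rcases hy with h' | h' <;> subst h <;> subst h'
            · exact Or.inl huxy
            · exact Or.inr (Or.inl huxy)
            · exact Or.inr (Or.inr (Or.inl huxy))
            · exact Or.inr (Or.inr (Or.inr huxy))

/-- A factor of `p^c` of length at most `(b-1)|p|` is a factor of `p^b` (for `b ≥ 1`). -/
lemma shift_lemma (p : List Bool) (b : ℕ) (hb : 1 ≤ b) :
    ∀ (c : ℕ) (u : List Bool), u.length ≤ (b - 1) * p.length →
    u <:+: (List.replicate c p).flatten → u <:+: (List.replicate b p).flatten := by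
  intro c
  induction c with
  | zero =>
      intro u _ hu
      rw [List.replicate_zero, List.flatten_nil, List.infix_nil] at hu
      subst hu; exact List.nil_infix
  | succ c ih =>
      intro u hlen hu
      by_cases hcb : c + 1 ≤ b
      · exact hu.trans (flatten_replicate_prefix _ _ p hcb).isInfix
      · push_neg at hcb
        obtain ⟨s, r, heq⟩ := hu
        rw [List.replicate_succ, List.flatten_cons] at heq
        by_cases hs : p.length ≤ s.length
        · have hspre : s <+: p ++ (List.replicate c p).flatten :=
            ⟨u ++ r, by rw [← heq]; simp⟩
          have hxp : p <+: s :=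
            List.prefix_of_prefix_length_le (List.prefix_append _ _) hspre hs
          obtain ⟨s', rfl⟩ := hxp
          have : s' ++ u ++ r = (List.replicate c p).flatten := by
            apply List.append_cancel_left (as := p); rw [← heq]; simp
          exact ih u hlen ⟨s', r, this⟩
        · push_neg at hs
          have hpre : (List.replicate b p).flatten <+: (List.replicate (c + 1) p).flatten :=
            flatten_replicate_prefix _ _ p (by omega)
          have hsupre : s ++ u <+: (List.replicate (c + 1) p).flatten := by
            refine ⟨r, ?_⟩
            rw [List.replicate_succ, List.flatten_cons]
            exact heq
          have hbp : b * p.length = (b - 1) * p.length + p.length := by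
            conv_lhs => rw [show b = (b - 1) + 1 by omega]
            rw [Nat.succ_mul]
          have hsu : s ++ u <+: (List.replicate b p).flatten := by
            refine List.prefix_of_prefix_length_le hsupre hpre ?_
            rw [flatten_replicate_length, List.length_append]
            omega
          exact (List.suffix_append s u).isInfix.trans hsu.isInfix

/-- For `m ≥ k`, both `α_m` and `β_m` are concatenations of blocks from `{α_k, β_k}`. -/
lemma decomp (n : ℕ → ℕ) (k : ℕ) :
    ∀ m, k ≤ m →
      (∃ L : List (List Bool), (∀ x ∈ L, x = wordA n k ∨ x = wordB n k) ∧
        L.flatten = wordA n m) ∧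
      (∃ L : List (List Bool), (∀ x ∈ L, x = wordA n k ∨ x = wordB n k) ∧
        L.flatten = wordB n m) := by
  intro m hm
  induction m, hm using Nat.le_induction with
  | base =>
      exact ⟨⟨[wordA n k], by simp, by simp⟩, ⟨[wordB n k], by simp, by simp⟩⟩
  | succ m hm ih =>
      obtain ⟨⟨LA, hLA, hLAf⟩, ⟨LB, hLB, hLBf⟩⟩ := ih
      constructor
      · refine ⟨(List.replicate (n (m + 1)) (LA ++ LA ++ LB)).flatten, ?_, ?_⟩
        · intro x hx
          rw [List.mem_flatten] at hx
          obtain ⟨l, hl, hxl⟩ := hx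
          rw [List.mem_replicate] at hl
          rw [hl.2] at hxl
          simp only [List.mem_append] at hxl
          rcases hxl with (h | h) | h
          exacts [hLA x h, hLA x h, hLB x h]
        · rw [flatten_replicate_flatten, wordA]
          congr 2
          rw [List.flatten_append, List.flatten_append, hLAf, hLBf]
      · refine ⟨(List.replicate (n (m + 1)) (LB ++ LB ++ LA)).flatten, ?_, ?_⟩
        · intro x hx
          rw [List.mem_flatten] at hx
          obtain ⟨l, hl, hxl⟩ := hx
          rw [List.mem_replicate] at hl
          rw [hl.2] at hxl
          simp only [List.mem_append] at hxl
          rcases hxl with (h | h) | h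
          exacts [hLB x h, hLB x h, hLA x h]
        · rw [flatten_replicate_flatten, wordB]
          congr 2
          rw [List.flatten_append, List.flatten_append, hLAf, hLBf]

lemma wordA_prefix_mono (n : ℕ → ℕ) (hn : ∀ j, 1 ≤ j → 2 ≤ n j) :
    ∀ {m M : ℕ}, m ≤ M → wordA n m <+: wordA n M := by
  intro m M h
  induction M, h using Nat.le_induction with
  | base => exact List.prefix_refl _
  | succ M hM ih =>
      refine ih.trans ?_
      rw [wordA]
      have h1 : 1 ≤ n (M + 1) := by have := hn (M + 1) (by omega); omega
      have : List.replicate (n (M + 1)) (wordA n M ++ wordA n M ++ wordB n M)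
          = (wordA n M ++ wordA n M ++ wordB n M) ::
            List.replicate (n (M + 1) - 1) (wordA n M ++ wordA n M ++ wordB n M) := by
        rw [← List.replicate_succ]; congr 1; omega
      rw [this, List.flatten_cons]
      exact ((List.prefix_append _ _).trans (List.prefix_append _ _)).trans
        (List.prefix_append _ _)

/-- Any factor `u` of the limit word `w` (equivalently, any factor of some
`α_m`) with `|u| ≤ Ñ_k = N_k - 3N_{k-1}` (for `k ≥ 1`) is a factor of `α_k β_k` or of
`β_k α_k`. -/
theorem stmt17 (n : ℕ → ℕ) (hn : ∀ j, 1 ≤ j → 2 ≤ n j) (k : ℕ) (hk : 1 ≤ k)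
    (u : List Bool) (m : ℕ) (hu : u <:+: wordA n m)
    (hlen : u.length ≤ Nlen n k - 3 * Nlen n (k - 1)) :
    u <:+: (wordA n k ++ wordB n k) ∨ u <:+: (wordB n k ++ wordA n k) := by
  set A := wordA n k with hA
  set B := wordB n k with hB
  set M := Nlen n (k - 1) with hM
  have hk1 : k = (k - 1) + 1 := by omega
  have hnk : 2 ≤ n k := hn k hk
  -- length facts
  have hNk : Nlen n k = M * (3 * n k) := by
    rw [hM, Nlen, Nlen, hk1, Finset.prod_Icc_succ_top (by omega), ← hk1]
  have hAlen : A.length = Nlen n k := (word_length n k).1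
  have hBlen : B.length = Nlen n k := (word_length n k).2
  -- `u` is a factor of `α_max(m,k)`
  have huM : u <:+: wordA n (max m k) :=
    hu.trans (wordA_prefix_mono n hn (le_max_left m k)).isInfix
  obtain ⟨⟨L, hLmem, hLf⟩, _⟩ := decomp n k (max m k) (le_max_right m k)
  have hulenA : u.length ≤ A.length := by
    rw [hAlen]; exact hlen.trans (Nat.sub_le _ _)
  have hpair := pair_lemma (hAlen.trans hBlen.symm) L hLmem u (by rw [hLf]; exact huM) hulenA
  -- the block `p = α_{k-1} α_{k-1} β_{k-1}` and `q = β_{k-1} β_{k-1} α_{k-1}`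
  set p := wordA n (k - 1) ++ wordA n (k - 1) ++ wordB n (k - 1) with hp
  set q := wordB n (k - 1) ++ wordB n (k - 1) ++ wordA n (k - 1) with hq
  have hplen : p.length = 3 * M := by
    rw [hp]; simp only [List.length_append, (word_length n (k - 1)).1,
      (word_length n (k - 1)).2, ← hM]; ring
  have hqlen : q.length = 3 * M := by
    rw [hq]; simp only [List.length_append, (word_length n (k - 1)).1,
      (word_length n (k - 1)).2, ← hM]; ring
  have hArep : A = (List.replicate (n k) p).flatten := by
    rw [hA, hk1, wordA, ← hk1]
  have hBrep : B = (List.replicate (n k) q).flatten := by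
    rw [hB, hk1, wordB, ← hk1]
  have hulen' : u.length ≤ (n k - 1) * p.length := by
    have h1 : (n k - 1) * p.length = Nlen n k - 3 * M := by
      rw [hplen, Nat.sub_mul, one_mul, hNk]; ring_nf
    rw [h1]; exact hlen
  have hulen'' : u.length ≤ (n k - 1) * q.length := by rwa [hqlen, ← hplen]
  -- handle the four cases
  rcases hpair with h | h | h | h
  · -- u <:+: A ++ A : reduce to u <:+: A
    have hAA : A ++ A = (List.replicate (n k + n k) p).flatten := by
      rw [List.replicate_add, List.flatten_append, ← hArep]
    rw [hAA] at h
    have := shift_lemma p (n k) (by omega) (n k + n k) u hulen' h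
    rw [← hArep] at this
    exact Or.inl (this.trans (List.prefix_append A B).isInfix)
  · exact Or.inl h
  · exact Or.inr h
  · -- u <:+: B ++ B : reduce to u <:+: B
    have hBB : B ++ B = (List.replicate (n k + n k) q).flatten := by
      rw [List.replicate_add, List.flatten_append, ← hBrep]
    rw [hBB] at h
    have := shift_lemma q (n k) (by omega) (n k + n k) u hulen'' h
    rw [← hBrep] at this
    exact Or.inr (this.trans (List.prefix_append B A).isInfix)
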